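/- For nonnegative integers n, k, m with n ≤ 2^k, D(2^(k+2m+1) + 2^k·(4^m − 1)/3 + n − 1) = 2^(k+2)·(4^m − 1)/3 + D(2^(k+1) + n − 1). -/

import Mathlib

/-- f m = (#1 digits) - (#0 digits) in the binary expansion of m. -/
def f (m : ℕ) : ℤ :=
  2 * ((Nat.digits 2 m).count 1 : ℤ) - ((Nat.digits 2 m).length : ℤ)

/-- Cumulated deficient binary digit sum (OEIS A268289), D 0 = 0. -/
def D (n : ℕ) : ℤ := ∑ m ∈ Finset.Icc 1 n, f m

namespace Stmt16Aux

def T : ℕ → ℕ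
  | 0 => 0
  | m + 1 => 4 * T m + 1

lemma T_spec (m : ℕ) : 3 * T m + 1 = 4 ^ m := by
  induction m with
  | zero => rfl
  | succ m ih => rw [pow_succ]; simp only [T]; omega

lemma digits_two (n : ℕ) (h : n ≠ 0) :
    Nat.digits 2 n = n % 2 :: Nat.digits 2 (n / 2) :=
  Nat.digits_def' (by norm_num) (Nat.pos_of_ne_zero h)

lemma f_zero : f 0 = 0 := by simp [f]

lemma f_odd (j : ℕ) : f (2 * j + 1) = f j + 1 := by
  unfold f
  rw [digits_two (2 * j + 1) (by omega)]
  have h1 : (2 * j + 1) % 2 = 1 := by omega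
  have h2 : (2 * j + 1) / 2 = j := by omega
  rw [h1, h2]
  simp [List.count_cons]
  ring

lemma f_even (j : ℕ) (h : j ≠ 0) : f (2 * j) = f j - 1 := by
  unfold f
  rw [digits_two (2 * j) (by omega)]
  have h1 : (2 * j) % 2 = 0 := by omega
  have h2 : (2 * j) / 2 = j := by omega
  rw [h1, h2]
  simp [List.count_cons]
  ring

def c (r : ℕ) : ℤ := ((Nat.digits 2 r).count 1 : ℤ)

lemma c_zero : c 0 = 0 := by simp [c]

lemma c_odd (r : ℕ) : c (2 * r + 1) = c r + 1 := by
  unfold c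
  rw [digits_two (2 * r + 1) (by omega)]
  have h1 : (2 * r + 1) % 2 = 1 := by omega
  have h2 : (2 * r + 1) / 2 = r := by omega
  rw [h1, h2]
  simp [List.count_cons]

lemma c_even (r : ℕ) : c (2 * r) = c r := by
  rcases Nat.eq_zero_or_pos r with h | h
  · simp [h]
  · unfold c
    rw [digits_two (2 * r) (by omega)]
    have h1 : (2 * r) % 2 = 0 := by omega
    have h2 : (2 * r) / 2 = r := by omega
    rw [h1, h2]
    simp [List.count_cons]

lemma f_split (H : ℕ) (hH : H ≠ 0) :
    ∀ (k r : ℕ), r < 2 ^ k → f (H * 2 ^ k + r) = f H + 2 * c r - (k : ℤ) := by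
  intro k
  induction k with
  | zero =>
    intro r hr
    have hr0 : r = 0 := by simpa using Nat.lt_one_iff.mp (by simpa using hr)
    subst hr0
    simp [c_zero]
  | succ k ih =>
    intro r hr
    have h2 : (2:ℕ) ^ (k + 1) = 2 * 2 ^ k := by ring
    have hpos : H * 2 ^ k ≠ 0 := by positivity
    rcases Nat.even_or_odd r with ⟨q, hq⟩ | ⟨q, hq⟩
    · have hqlt : q < 2 ^ k := by omega
      have e : H * 2 ^ (k + 1) + r = 2 * (H * 2 ^ k + q) := by
        rw [h2]; ring_nf; omega
      rw [e, f_even _ (by omega), ih q hqlt,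
        show r = 2 * q by omega, c_even]
      push_cast
      ring
    · have hqlt : q < 2 ^ k := by omega
      have e : H * 2 ^ (k + 1) + r = 2 * (H * 2 ^ k + q) + 1 := by
        rw [h2]; ring_nf; omega
      rw [e, f_odd, ih q hqlt, show r = 2 * q + 1 from hq, c_odd]
      push_cast
      ring

lemma D_zero : D 0 = 0 := by simp [D]

lemma D_succ (n : ℕ) : D (n + 1) = D n + f (n + 1) := by
  unfold D
  rw [Finset.sum_Icc_succ_top (by omega)]

lemma D_one : D 1 = 1 := by
  have h1 := D_succ 0
  have h2 := f_odd 0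
  rw [D_zero, f_zero] at *
  simp at h2
  linarith

lemma D_odd (n : ℕ) : D (2 * n + 1) = 2 * D n + 1 := by
  induction n with
  | zero => simpa [D_zero] using D_one
  | succ n ih =>
    have e1 : 2 * (n + 1) + 1 = (2 * n + 1) + 1 + 1 := by ring
    rw [e1, D_succ, D_succ, ih, D_succ,
      show (2 * n + 1) + 1 + 1 = 2 * (n + 1) + 1 by ring,
      show (2 * n + 1) + 1 = 2 * (n + 1) by ring,
      f_even _ (by omega), f_odd]
    ring

lemma D_even (n : ℕ) : D (2 * n) = 2 * D n - f n := by
  have h1 := D_odd n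
  have h2 := D_succ (2 * n)
  have h3 := f_odd n
  linarith

lemma D_add (a : ℕ) : ∀ t, D (a + t) = D a + ∑ i ∈ Finset.range t, f (a + i + 1) := by
  intro t
  induction t with
  | zero => simp
  | succ t ih =>
    rw [show a + (t + 1) = (a + t) + 1 by ring, D_succ, ih, Finset.sum_range_succ]
    ring

lemma D_mul_pow (H : ℕ) (hH : H ≠ 0) (k : ℕ) :
    D (H * 2 ^ k - 1) = 2 ^ k * (D (H - 1) + 1) - 1 := by
  induction k with
  | zero => simp
  | succ k ih =>
    have hpos : 1 ≤ H * 2 ^ k := Nat.one_le_iff_ne_zero.2 (by positivity)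
    have e : H * 2 ^ (k + 1) - 1 = 2 * (H * 2 ^ k - 1) + 1 := by
      have h2 : H * 2 ^ (k + 1) = 2 * (H * 2 ^ k) := by ring
      omega
    rw [e, D_odd, ih]
    push_cast [pow_succ]
    ring

lemma f_H (m : ℕ) : f (2 ^ (2 * m + 1) + T m) = 0 := by
  induction m with
  | zero =>
    have h1 := f_even 1 one_ne_zero
    have h0 := f_odd 0
    rw [f_zero] at h0
    simp only [T]
    norm_num at *
    omega
  | succ m ih =>
    have hpow : 2 ^ (2 * (m + 1) + 1) = 4 * 2 ^ (2 * m + 1) := by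
      rw [show 2 * (m + 1) + 1 = (2 * m + 1) + 2 by ring, pow_add]; ring
    have e : 2 ^ (2 * (m + 1) + 1) + T (m + 1)
        = 2 * (2 * (2 ^ (2 * m + 1) + T m)) + 1 := by
      simp only [T]; omega
    rw [e, f_odd, f_even _ (by positivity : 0 < 2 ^ (2 * m + 1) + T m).ne', ih]
    ring

lemma D_H (m : ℕ) : D (2 ^ (2 * m + 1) + T m - 1) = T (m + 1) := by
  induction m with
  | zero => simpa [T] using D_one
  | succ m ih =>
    have hX1 : 0 < 2 ^ (2 * m + 1) + T m := by positivity
    have hpow : 2 ^ (2 * (m + 1) + 1) = 4 * 2 ^ (2 * m + 1) := by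
      rw [show 2 * (m + 1) + 1 = (2 * m + 1) + 2 by ring, pow_add]; ring
    have e : 2 ^ (2 * (m + 1) + 1) + T (m + 1) - 1
        = 2 * (2 * (2 ^ (2 * m + 1) + T m)) := by
      simp only [T]; omega
    have hDX : D (2 ^ (2 * m + 1) + T m)
        = D (2 ^ (2 * m + 1) + T m - 1) + f (2 ^ (2 * m + 1) + T m) := by
      have := D_succ (2 ^ (2 * m + 1) + T m - 1)
      rwa [show 2 ^ (2 * m + 1) + T m - 1 + 1 = 2 ^ (2 * m + 1) + T m by omega] at this
    rw [e, D_even, D_even, f_even _ (by positivity : 0 < 2 ^ (2 * m + 1) + T m).ne', f_H m, hDX, f_H m, ih]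
    simp only [T]
    push_cast
    ring

end Stmt16Aux

open Stmt16Aux in
theorem stmt_16 (n k m : ℕ) (h : n ≤ 2 ^ k) :
    D (2 ^ (k + 2 * m + 1) + 2 ^ k * (4 ^ m - 1) / 3 + n - 1) =
      2 ^ (k + 2) * ((4 ^ m - 1 : ℤ)) / 3 + D (2 ^ (k + 1) + n - 1) := by
  have hT := T_spec m
  set H : ℕ := 2 ^ (2 * m + 1) + T m with hH
  have hHne : H ≠ 0 := by positivity
  have hk1 : (1:ℕ) ≤ 2 ^ k := Nat.one_le_two_pow
  have hNpos : 1 ≤ H * 2 ^ k := Nat.one_le_iff_ne_zero.2 (by positivity)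
  have hmul : H * 2 ^ k = 2 ^ (2 * m + 1) * 2 ^ k + 2 ^ k * T m := by
    rw [hH]; ring
  have e1 : 2 ^ (k + 2 * m + 1) + 2 ^ k * (4 ^ m - 1) / 3 + n - 1
      = (H * 2 ^ k - 1) + n := by
    have h1 : 2 ^ (k + 2 * m + 1) = 2 ^ (2 * m + 1) * 2 ^ k := by
      rw [← pow_add]; ring_nf
    have h2 : 2 ^ k * (4 ^ m - 1) / 3 = 2 ^ k * T m := by
      have h3 : 2 ^ k * (4 ^ m - 1) = 3 * (2 ^ k * T m) := by
        have h4 : 4 ^ m - 1 = 3 * T m := by omega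
        rw [h4]; ring
      rw [h3]; exact Nat.mul_div_cancel_left _ (by norm_num)
    rw [h1, h2]
    omega
  have e2 : 2 ^ (k + 1) + n - 1 = (2 * 2 ^ k - 1) + n := by
    have h5 : (2:ℕ) ^ (k + 1) = 2 * 2 ^ k := by ring
    omega
  rw [e1, e2, D_add, D_add]
  have hsum : ∀ i ∈ Finset.range n,
      f (H * 2 ^ k - 1 + i + 1) = f (2 * 2 ^ k - 1 + i + 1) := by
    intro i hi
    simp only [Finset.mem_range] at hi
    have hi' : i < 2 ^ k := lt_of_lt_of_le hi h
    rw [show H * 2 ^ k - 1 + i + 1 = H * 2 ^ k + i by omega,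
      show 2 * 2 ^ k - 1 + i + 1 = 2 * 2 ^ k + i by omega,
      f_split H hHne k i hi', f_split 2 (by norm_num) k i hi']
    have hf2 : f 2 = 0 := by
      have h1 := f_even 1 one_ne_zero
      have h0 := f_odd 0
      rw [f_zero] at h0
      norm_num at *
      omega
    rw [hf2, hH, f_H m]
  rw [Finset.sum_congr rfl hsum]
  have b1 : D (H * 2 ^ k - 1) = 2 ^ k * ((T (m + 1) : ℤ) + 1) - 1 := by
    rw [D_mul_pow H hHne k,
      show H - 1 = 2 ^ (2 * m + 1) + T m - 1 by rw [hH], D_H m]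
  have b2 : D (2 * 2 ^ k - 1) = 2 ^ k * 2 - 1 := by
    rw [D_mul_pow 2 (by norm_num) k]
    norm_num [D_one]
  have b3 : 2 ^ (k + 2) * ((4 ^ m - 1 : ℤ)) / 3 = 2 ^ (k + 2) * (T m : ℤ) := by
    have h6 : ((4:ℤ) ^ m - 1) = 3 * (T m : ℤ) := by
      have h7 : (3 * (T m : ℤ) + 1) = 4 ^ m := by exact_mod_cast hT
      linarith
    rw [h6, show (2:ℤ) ^ (k + 2) * (3 * (T m : ℤ)) = 3 * (2 ^ (k + 2) * (T m : ℤ)) by ring,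
      Int.mul_ediv_cancel_left _ (by norm_num)]
  rw [b1, b2, b3]
  simp only [T]
  push_cast [pow_add]
  ring
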